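/- arXiv:2407.00300 — 2 statements merged into one kernel-verified Lean document; each statement's English description precedes it below -/
import Mathlib

section
/- Let γ > 0 and let f be a Schwartz function on ℝ². Then the commutator identity [(1−γΔ)^{−1}, y]·∇f = 2γ (1−γΔ)^{−2} Δ f holds, i.e. (1−γΔ)^{−1}(y·∇f) − y·∇((1−γΔ)^{−1}f) = 2γ (1−γΔ)^{−2} Δ f. -/
open MeasureTheory Complex

abbrev E2 := EuclideanSpace ℝ (Fin 2)

/-- Fourier transform on ℝ² with normalization `(2π)⁻¹ ∫ h(y) e^{-i y·ξ} dy`. -/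
noncomputable def ft2 (h : E2 → ℂ) (ξ : E2) : ℂ :=
  (2 * Real.pi)⁻¹ • ∫ y : E2, h y * Complex.exp (-(Complex.I * ((inner ℝ y ξ : ℝ) : ℂ)))

/-- Inverse Fourier transform on ℝ². -/
noncomputable def ift2 (h : E2 → ℂ) (y : E2) : ℂ :=
  (2 * Real.pi)⁻¹ • ∫ ξ : E2, h ξ * Complex.exp (Complex.I * ((inner ℝ y ξ : ℝ) : ℂ))

/-- The resolvent power `(1-γΔ)^{-m}` as a Fourier multiplier with symbol
`(1+γ|ξ|²)^{-m}`. -/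
noncomputable def resolv (γ : ℝ) (m : ℕ) (h : E2 → ℂ) : E2 → ℂ :=
  ift2 fun ξ => (((1 + γ * ‖ξ‖ ^ 2) ^ m : ℝ) : ℂ)⁻¹ * ft2 h ξ

/-- The Laplacian `Δh = ∂₁²h + ∂₂²h` on ℝ². -/
noncomputable def lap2 (h : E2 → ℂ) (x : E2) : ℂ :=
  ∑ i : Fin 2,
    iteratedFDeriv ℝ 2 h x ![EuclideanSpace.single i 1, EuclideanSpace.single i 1]

noncomputable def Lb : E2 →L[ℝ] E2 →L[ℝ] ℝ := (2 * Real.pi)⁻¹ • innerSL ℝ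
noncomputable def Fi {F : Type*} [NormedAddCommGroup F] [NormedSpace ℂ F] (h : E2 → F) : E2 → F :=
  VectorFourier.fourierIntegral Real.fourierChar volume Lb.toLinearMap₁₂ h
lemma Lb_apply (v w : E2) : Lb v w = (2 * Real.pi)⁻¹ * (inner ℝ v w : ℝ) := rfl
lemma char_eq (v w : E2) :
    ((Real.fourierChar (-(Lb v w)) : Circle) : ℂ)
      = Complex.exp (-(Complex.I * ((inner ℝ v w : ℝ) : ℂ))) := by
  rw [Real.fourierChar_apply, Lb_apply]
  have h : 2 * Real.pi * (-((2 * Real.pi)⁻¹ * (inner ℝ v w : ℝ))) = -(inner ℝ v w : ℝ) := by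
    field_simp
  rw [h]; push_cast; ring_nf

lemma Fi_eq (h : E2 → ℂ) (ξ : E2) :
    Fi h ξ = ∫ v : E2, h v * Complex.exp (-(Complex.I * ((inner ℝ v ξ : ℝ) : ℂ))) := by
  unfold Fi VectorFourier.fourierIntegral
  congr 1; funext v
  rw [ContinuousLinearMap.toLinearMap₁₂_apply_apply_apply, Circle.smul_def, char_eq, smul_eq_mul]; ring

lemma ft2_eq (h : E2 → ℂ) (ξ : E2) :
    ft2 h ξ = (((2 * Real.pi)⁻¹ : ℝ) : ℂ) * Fi h ξ := by
  rw [ft2, Fi_eq, Complex.real_smul]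

lemma ift2_eq (h : E2 → ℂ) (y : E2) :
    ift2 h y = (((2 * Real.pi)⁻¹ : ℝ) : ℂ) * Fi h (-y) := by
  rw [ift2, Fi_eq, Complex.real_smul]
  congr 2; funext ξ
  congr 2
  have : (inner ℝ ξ (-y) : ℝ) = -(inner ℝ y ξ : ℝ) := by
    rw [inner_neg_right, real_inner_comm]
  rw [this]; push_cast; ring

lemma resolv_eq (γ : ℝ) (m : ℕ) (h : E2 → ℂ) (y : E2) :
    resolv γ m h y = (((2 * Real.pi)⁻¹ : ℝ) : ℂ)
      * Fi (fun ξ => (((1 + γ * ‖ξ‖ ^ 2) ^ m : ℝ) : ℂ)⁻¹ * ft2 h ξ) (-y) := by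
  rw [resolv, ift2_eq]

open SchwartzMap

lemma schwartz_int_norm_mul {W : Type*} [NormedAddCommGroup W] [NormedSpace ℝ W]
    (u : 𝓢(E2, W)) : Integrable (fun v : E2 => ‖v‖ * ‖u v‖) volume := by
  simpa using u.integrable_pow_mul volume 1

lemma hasFDerivAt_Fi (u : 𝓢(E2, ℂ)) (ξ : E2) :
    HasFDerivAt (Fi ⇑u) (Fi (VectorFourier.fourierSMulRight Lb ⇑u) ξ) ξ :=
  VectorFourier.hasFDerivAt_fourierIntegral Lb u.integrable (schwartz_int_norm_mul u) ξ

lemma Fi_clm_apply {u : E2 → (E2 →L[ℝ] ℂ)} (hu : Integrable u volume) (ξ a : E2) :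
    Fi u ξ a = Fi (fun x => u x a) ξ :=
  Real.fourierIntegral_continuousLinearMap_apply' (L := Lb) hu

lemma integrable_fourierSMulRight (u : 𝓢(E2, ℂ)) :
    Integrable (VectorFourier.fourierSMulRight Lb ⇑u) volume := by
  refine ((schwartz_int_norm_mul u).const_mul (2 * Real.pi * ‖Lb‖)).mono'
    (u.continuous.aestronglyMeasurable.fourierSMulRight) (ae_of_all _ fun v => ?_)
  simpa [mul_assoc] using VectorFourier.norm_fourierSMulRight_le Lb ⇑u v

lemma fderiv_eq_schwartz (u : 𝓢(E2, ℂ)) : fderiv ℝ ⇑u = ⇑(fderivCLM ℝ E2 ℂ u) := by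
  funext x; exact (fderivCLM_apply ℝ u x).symm

lemma fderiv_integrable (u : 𝓢(E2, ℂ)) : Integrable (fderiv ℝ ⇑u) volume := by
  rw [fderiv_eq_schwartz]; exact (fderivCLM ℝ E2 ℂ u).integrable

lemma Fi_fderiv (u : 𝓢(E2, ℂ)) (ξ v : E2) :
    Fi (fun x => fderiv ℝ ⇑u x v) ξ = (Complex.I * ((inner ℝ v ξ : ℝ) : ℂ)) * Fi ⇑u ξ := by
  have h := VectorFourier.fourierIntegral_fderiv Lb u.integrable u.differentiable
    (fderiv_integrable u)
  have h2 : Fi (fun x => fderiv ℝ ⇑u x v) ξ = Fi (fderiv ℝ ⇑u) ξ v :=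
    (Fi_clm_apply (fderiv_integrable u) ξ v).symm
  rw [h2, show Fi (fderiv ℝ ⇑u) = VectorFourier.fourierSMulRight (-Lb.flip)
      (VectorFourier.fourierIntegral Real.fourierChar volume Lb.toLinearMap₁₂ ⇑u) from h]
  show -(2 * ↑Real.pi * I) • (-Lb.flip) ξ v • Fi (⇑u) ξ = _
  simp only [ContinuousLinearMap.neg_apply, ContinuousLinearMap.flip_apply, Lb_apply,
    Complex.real_smul, smul_eq_mul]
  push_cast
  have : (Real.pi : ℂ) ≠ 0 := Complex.ofReal_ne_zero.2 Real.pi_ne_zero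
  field_simp

noncomputable def e2 (i : Fin 2) : E2 := EuclideanSpace.single i (1:ℝ)

lemma inner_e2_right (x : E2) (i : Fin 2) : (inner ℝ x (e2 i) : ℝ) = x i := by
  simp [e2, EuclideanSpace.inner_single_right]

lemma inner_e2_left (x : E2) (i : Fin 2) : (inner ℝ (e2 i) x : ℝ) = x i := by
  simp [e2, EuclideanSpace.inner_single_left]

lemma inner_e2_e2 (i : Fin 2) : (inner ℝ (e2 i) (e2 i) : ℝ) = 1 := by
  simp [inner_e2_left, e2, EuclideanSpace.single_apply]

lemma decomp (x : E2) : ∑ i : Fin 2, ((inner ℝ x (e2 i) : ℝ)) • e2 i = x := by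
  simp only [inner_e2_right]
  simpa [e2, EuclideanSpace.basisFun_apply, EuclideanSpace.basisFun_repr] using
    (EuclideanSpace.basisFun (Fin 2) ℝ).sum_repr x

lemma sum_inner_mul_apply (T : E2 →L[ℝ] ℂ) (x : E2) :
    ∑ i : Fin 2, ((inner ℝ x (e2 i) : ℝ) : ℂ) * T (e2 i) = T x := by
  have : ∑ i : Fin 2, ((inner ℝ x (e2 i) : ℝ) : ℂ) * T (e2 i)
      = ∑ i : Fin 2, T (((inner ℝ x (e2 i) : ℝ)) • e2 i) := by
    refine Finset.sum_congr rfl fun i _ => ?_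
    rw [T.map_smul, Complex.real_smul]
  rw [this, ← map_sum, decomp]

lemma cont_exp_neg (ξ : E2) :
    Continuous fun v : E2 => Complex.exp (-(Complex.I * ((inner ℝ v ξ : ℝ) : ℂ))) :=
  Complex.continuous_exp.comp
    ((continuous_const.mul (Complex.continuous_ofReal.comp
      (continuous_id.inner continuous_const))).neg)

lemma norm_exp_neg (v ξ : E2) : ‖Complex.exp (-(Complex.I * ((inner ℝ v ξ : ℝ) : ℂ)))‖ = 1 := by
  simp [Complex.norm_exp]

lemma integrable_mul_exp {u : E2 → ℂ} (hu : Integrable u volume) (ξ : E2) :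
    Integrable (fun v => u v * Complex.exp (-(Complex.I * ((inner ℝ v ξ : ℝ) : ℂ)))) volume := by
  refine hu.norm.mono' (hu.aestronglyMeasurable.mul (cont_exp_neg ξ).aestronglyMeasurable)
    (ae_of_all _ fun v => ?_)
  rw [norm_mul, norm_exp_neg, mul_one]

lemma Fi_neg (h : E2 → ℂ) (ξ : E2) : Fi (fun x => -h x) ξ = -Fi h ξ := by
  simp [Fi_eq, neg_mul, integral_neg]

lemma Fi_const_mul (c : ℂ) (h : E2 → ℂ) (ξ : E2) :
    Fi (fun x => c * h x) ξ = c * Fi h ξ := by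
  simp [Fi_eq, mul_assoc, MeasureTheory.integral_const_mul]

lemma Fi_sum (u : Fin 2 → E2 → ℂ) (hu : ∀ i, Integrable (u i) volume) (ξ : E2) :
    Fi (fun x => ∑ i : Fin 2, u i x) ξ = ∑ i : Fin 2, Fi (u i) ξ := by
  simp only [Fi_eq, Finset.sum_mul]
  exact integral_finset_sum _ fun i _ => integrable_mul_exp (hu i) ξ

lemma Fi_mul_coord (u : 𝓢(E2, ℂ)) (ξ v : E2) :
    Fi (fun x => ((inner ℝ x v : ℝ) : ℂ) * u x) ξ
      = Complex.I * (Fi (VectorFourier.fourierSMulRight Lb ⇑u) ξ v) := by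
  rw [Fi_clm_apply (integrable_fourierSMulRight u) ξ v]
  have h : (fun x => VectorFourier.fourierSMulRight Lb (⇑u) x v)
      = fun x => (-Complex.I) * (((inner ℝ x v : ℝ) : ℂ) * u x) := by
    funext x
    show -(2 * ↑Real.pi * Complex.I) • Lb x v • u x = _
    simp only [Lb_apply, Complex.real_smul, smul_eq_mul]
    have : (Real.pi : ℂ) ≠ 0 := Complex.ofReal_ne_zero.2 Real.pi_ne_zero
    push_cast
    field_simp
  rw [h, Fi_const_mul, ← mul_assoc, mul_neg, Complex.I_mul_I, neg_neg, one_mul]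

noncomputable def pder (i : Fin 2) (u : 𝓢(E2, ℂ)) : 𝓢(E2, ℂ) :=
  SchwartzMap.evalCLM ℝ E2 ℂ (e2 i) (fderivCLM ℝ E2 ℂ u)

lemma pder_apply (i : Fin 2) (u : 𝓢(E2, ℂ)) (x : E2) :
    pder i u x = fderiv ℝ ⇑u x (e2 i) := rfl

lemma sum_coord_mul_apply (T : E2 →L[ℝ] ℂ) (x : E2) :
    ∑ i : Fin 2, ((x i : ℝ) : ℂ) * T (e2 i) = T x := by
  simp_rw [← inner_e2_right]
  exact sum_inner_mul_apply T x

lemma integrable_coord_mul (u : 𝓢(E2, ℂ)) (i : Fin 2) :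
    Integrable (fun x : E2 => ((x i : ℝ) : ℂ) * u x) volume := by
  refine (schwartz_int_norm_mul u).mono'
    (((Complex.continuous_ofReal.comp ?_).mul u.continuous).aestronglyMeasurable)
    (ae_of_all _ fun x => ?_)
  · exact (continuous_apply i).comp (PiLp.continuous_ofLp 2 _)  -- continuity of x ↦ x i on PiLp?
  · rw [norm_mul, Complex.norm_real]
    gcongr
    have h := abs_real_inner_le_norm x (e2 i)
    rw [inner_e2_right] at h
    calc ‖x i‖ = |x i| := Real.norm_eq_abs _
    _ ≤ ‖x‖ * ‖e2 i‖ := h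
    _ ≤ ‖x‖ := by simp [e2, EuclideanSpace.norm_single]

lemma L_A (f : 𝓢(E2, ℂ)) (ξ : E2) :
    Fi (fun x => fderiv ℝ ⇑f x x) ξ = -(2 * Fi ⇑f ξ + fderiv ℝ (Fi ⇑f) ξ ξ) := by
  have hsum : (fun x : E2 => fderiv ℝ ⇑f x x)
      = fun x => ∑ i : Fin 2, ((x i : ℝ) : ℂ) * pder i f x := by
    funext x
    rw [← sum_coord_mul_apply (fderiv ℝ ⇑f x) x]
    rfl
  have hint : ∀ i : Fin 2, Integrable (fun x : E2 => ((x i : ℝ) : ℂ) * pder i f x) volume :=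
    fun i => integrable_coord_mul (pder i f) i
  rw [hsum, Fi_sum _ hint ξ]
  have hterm : ∀ i : Fin 2, Fi (fun x => ((x i : ℝ) : ℂ) * pder i f x) ξ
      = -(Fi ⇑f ξ + ((ξ i : ℝ) : ℂ) * (fderiv ℝ (Fi ⇑f) ξ (e2 i))) := by
    intro i
    have hcoe : (fun x : E2 => ((x i : ℝ) : ℂ) * pder i f x)
        = fun x => ((inner ℝ x (e2 i) : ℝ) : ℂ) * pder i f x := by
      simp_rw [inner_e2_right]
    rw [hcoe, Fi_mul_coord (pder i f) ξ (e2 i),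
      show Fi (VectorFourier.fourierSMulRight Lb ⇑(pder i f)) ξ
        = fderiv ℝ (Fi ⇑(pder i f)) ξ from ((hasFDerivAt_Fi (pder i f) ξ).fderiv).symm]
    have hFg : Fi ⇑(pder i f) = fun w => (Complex.I * ((inner ℝ (e2 i) w : ℝ) : ℂ)) * Fi ⇑f w := by
      funext w
      rw [← Fi_fderiv f w (e2 i)]
      rfl
    have h2 := hasFDerivAt_Fi f ξ
    have h1 : HasFDerivAt (fun w : E2 => (Complex.I * ((inner ℝ (e2 i) w : ℝ) : ℂ)))
        (Complex.I • ((Complex.ofRealCLM).comp (innerSL ℝ (e2 i)))) ξ := by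
      simpa using (((Complex.ofRealCLM).comp (innerSL ℝ (e2 i))).hasFDerivAt
        (x := ξ)).const_mul Complex.I
    have h3 : HasFDerivAt (fun w => Complex.I * ((inner ℝ (e2 i) w : ℝ) : ℂ) * Fi ⇑f w) _ ξ :=
      h1.mul h2
    rw [hFg, h3.fderiv]
    have h2f : Fi (VectorFourier.fourierSMulRight Lb ⇑f) ξ = fderiv ℝ (Fi ⇑f) ξ := h2.fderiv.symm
    simp only [ContinuousLinearMap.add_apply, ContinuousLinearMap.smul_apply,
      ContinuousLinearMap.coe_comp', Function.comp_apply, innerSL_apply_apply,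
      Complex.ofRealCLM_apply, smul_eq_mul, inner_e2_e2, inner_e2_left, h2f]
    push_cast
    ring_nf
    simp [Complex.I_sq, e2, EuclideanSpace.single_apply]
    ring_nf
  rw [Finset.sum_congr rfl fun i _ => hterm i]
  rw [Finset.sum_neg_distrib, Finset.sum_add_distrib, sum_coord_mul_apply (fderiv ℝ (Fi ⇑f) ξ) ξ]
  simp [two_mul]

lemma sum_sq_coord (ξ : E2) : ∑ i : Fin 2, (ξ i) ^ 2 = ‖ξ‖ ^ 2 := by
  rw [← real_inner_self_eq_norm_sq]
  simp [PiLp.inner_apply, RCLike.inner_apply, sq, -real_inner_self_eq_norm_sq]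
  rw [EuclideanSpace.norm_eq, Real.mul_self_sqrt (by positivity)]
  simp [Fin.sum_univ_two, sq]

lemma second_deriv_eq (u : 𝓢(E2, ℂ)) (i : Fin 2) (x : E2) :
    fderiv ℝ (fderiv ℝ ⇑u) x (e2 i) (e2 i) = fderiv ℝ ⇑(pder i u) x (e2 i) := by
  have hc : DifferentiableAt ℝ (fderiv ℝ ⇑u) x := by
    rw [fderiv_eq_schwartz]; exact ((fderivCLM ℝ E2 ℂ u).differentiable).differentiableAt
  have h : ⇑(pder i u) = fun z => fderiv ℝ ⇑u z (e2 i) := rfl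
  rw [h, fderiv_clm_apply hc (differentiableAt_const (e2 i))]
  simp

lemma L_C (f : 𝓢(E2, ℂ)) (ξ : E2) :
    Fi (lap2 ⇑f) ξ = (-((‖ξ‖ ^ 2 : ℝ) : ℂ)) * Fi ⇑f ξ := by
  have hlap : lap2 ⇑f = fun x => ∑ i : Fin 2, fderiv ℝ ⇑(pder i f) x (e2 i) := by
    funext x
    unfold lap2
    refine Finset.sum_congr rfl fun i _ => ?_
    rw [iteratedFDeriv_two_apply]
    simpa [e2] using (second_deriv_eq f i x)
  have hint : ∀ i : Fin 2, Integrable (fun x => fderiv ℝ ⇑(pder i f) x (e2 i)) volume :=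
    fun i => (pder i (pder i f)).integrable
  rw [hlap, Fi_sum _ hint ξ]
  have hpt : ∀ i : Fin 2, Fi (fun x => fderiv ℝ ⇑(pder i f) x (e2 i)) ξ
      = -((((ξ i) ^ 2 : ℝ)) : ℂ) * Fi ⇑f ξ := by
    intro i
    rw [Fi_fderiv (pder i f) ξ (e2 i), inner_e2_left,
      show Fi ⇑(pder i f) ξ = Fi (fun x => fderiv ℝ ⇑f x (e2 i)) ξ from rfl,
      Fi_fderiv f ξ (e2 i), inner_e2_left]
    have h : (Complex.I * ((ξ i : ℝ) : ℂ)) * ((Complex.I * ((ξ i : ℝ) : ℂ)) * Fi ⇑f ξ)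
        = (Complex.I * Complex.I) * (((ξ i : ℝ) : ℂ) * ((ξ i : ℝ) : ℂ) * Fi ⇑f ξ) := by ring
    rw [h, Complex.I_mul_I]
    push_cast
    ring
  rw [Finset.sum_congr rfl fun i _ => hpt i, ← Finset.sum_mul]
  congr 1
  rw [Finset.sum_neg_distrib]
  congr 1
  rw [show ((‖ξ‖ ^ 2 : ℝ) : ℂ) = ((∑ i : Fin 2, (ξ i) ^ 2 : ℝ) : ℂ) by rw [sum_sq_coord]]
  push_cast
  rfl

noncomputable def c1 (γ : ℝ) (ξ : E2) : ℂ := (((1 + γ * ‖ξ‖ ^ 2 : ℝ)) : ℂ)⁻¹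
noncomputable def c2 (γ : ℝ) (ξ : E2) : ℂ := ((((1 + γ * ‖ξ‖ ^ 2) ^ 2 : ℝ)) : ℂ)⁻¹
noncomputable def eYf (y ξ : E2) : ℂ := Complex.exp (Complex.I * ((inner ℝ y ξ : ℝ) : ℂ))
noncomputable def c1d (γ : ℝ) (ξ : E2) : E2 →L[ℝ] ℂ :=
  (-(2 * (γ : ℂ)) * c2 γ ξ) • ((Complex.ofRealCLM).comp (innerSL ℝ ξ))

lemma c1d_apply (γ : ℝ) (ξ v : E2) :
    c1d γ ξ v = -(2 * (γ : ℂ)) * c2 γ ξ * ((inner ℝ ξ v : ℝ) : ℂ) := by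
  simp [c1d, mul_assoc]

lemma Npos {γ : ℝ} (hγ : 0 < γ) (ξ : E2) : (0 : ℝ) < 1 + γ * ‖ξ‖ ^ 2 := by positivity

lemma None_le {γ : ℝ} (hγ : 0 < γ) (ξ : E2) : (1 : ℝ) ≤ 1 + γ * ‖ξ‖ ^ 2 := by
  nlinarith [norm_nonneg ξ, sq_nonneg ‖ξ‖]

lemma Nne {γ : ℝ} (hγ : 0 < γ) (ξ : E2) : (((1 + γ * ‖ξ‖ ^ 2 : ℝ)) : ℂ) ≠ 0 :=
  Complex.ofReal_ne_zero.2 (ne_of_gt (Npos hγ ξ))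

lemma c1_norm_le {γ : ℝ} (hγ : 0 < γ) (ξ : E2) : ‖c1 γ ξ‖ ≤ 1 := by
  rw [c1, norm_inv, Complex.norm_real, Real.norm_eq_abs,
    abs_of_pos (Npos hγ ξ)]
  rw [inv_le_one_iff₀]
  right; exact None_le hγ ξ

lemma c2_norm_le {γ : ℝ} (hγ : 0 < γ) (ξ : E2) : ‖c2 γ ξ‖ ≤ 1 := by
  rw [c2, norm_inv, Complex.norm_real, Real.norm_eq_abs,
    abs_of_pos (by positivity : (0:ℝ) < (1 + γ * ‖ξ‖ ^ 2) ^ 2)]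
  rw [inv_le_one_iff₀]
  right
  nlinarith [None_le hγ ξ]

lemma cont_c1 {γ : ℝ} (hγ : 0 < γ) : Continuous (c1 γ) := by
  apply Continuous.inv₀
  · exact Complex.continuous_ofReal.comp
      (continuous_const.add (continuous_const.mul ((continuous_norm).pow 2)))
  · exact fun ξ => Nne hγ ξ

lemma cont_c2 {γ : ℝ} (hγ : 0 < γ) : Continuous (c2 γ) := by
  apply Continuous.inv₀
  · exact Complex.continuous_ofReal.comp
      (((continuous_const.add (continuous_const.mul ((continuous_norm).pow 2)))).pow 2)
  · intro ξ
    exact Complex.ofReal_ne_zero.2 (by positivity)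

lemma cont_eY (y : E2) : Continuous (eYf y) :=
  Complex.continuous_exp.comp (continuous_const.mul
    (Complex.continuous_ofReal.comp (continuous_const.inner continuous_id)))

lemma norm_eY (y ξ : E2) : ‖eYf y ξ‖ = 1 := by
  simp [eYf, Complex.norm_exp]

lemma hasFDerivAt_c1 {γ : ℝ} (hγ : 0 < γ) (ξ : E2) :
    HasFDerivAt (c1 γ) (c1d γ ξ) ξ := by
  have hN : HasFDerivAt (fun ξ : E2 => 1 + γ * ‖ξ‖ ^ 2) (γ • (2 • innerSL ℝ ξ)) ξ := by
    simpa using (((hasStrictFDerivAt_norm_sq ξ).hasFDerivAt).const_mul γ).const_add 1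
  have hNc : HasFDerivAt (fun ξ : E2 => (((1 + γ * ‖ξ‖ ^ 2 : ℝ)) : ℂ))
      ((Complex.ofRealCLM).comp (γ • (2 • innerSL ℝ ξ))) ξ :=
    (Complex.ofRealCLM.hasFDerivAt).comp ξ hN
  have hinv : HasFDerivAt (c1 γ) _ ξ := (hasFDerivAt_inv' (𝕜 := ℝ) (Nne hγ ξ)).comp ξ hNc
  refine hinv.congr_fderiv ?_
  symm
  ext v
  simp only [c1d_apply, ContinuousLinearMap.coe_comp', Function.comp_apply,
    ContinuousLinearMap.neg_apply, ContinuousLinearMap.mulLeftRight_apply,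
    ContinuousLinearMap.smul_apply, Complex.ofRealCLM_apply, innerSL_apply_apply,
    smul_eq_mul, Complex.real_smul]
  rw [c2]
  push_cast
  have hne := Nne hγ ξ
  field_simp
  ring

lemma hasFDerivAt_eY (y ξ : E2) :
    HasFDerivAt (eYf y) ((eYf y ξ) • (Complex.I • ((Complex.ofRealCLM).comp (innerSL ℝ y)))) ξ := by
  have h1 : HasFDerivAt (fun ξ : E2 => Complex.I * ((inner ℝ y ξ : ℝ) : ℂ))
      (Complex.I • ((Complex.ofRealCLM).comp (innerSL ℝ y))) ξ := by
    simpa using (((Complex.ofRealCLM).comp (innerSL ℝ y)).hasFDerivAt (x := ξ)).const_mul Complex.I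
  exact h1.cexp

lemma fderiv_eY_apply (y ξ v : E2) :
    fderiv ℝ (eYf y) ξ v = eYf y ξ * (Complex.I * ((inner ℝ y v : ℝ) : ℂ)) := by
  rw [(hasFDerivAt_eY y ξ).fderiv]
  simp [smul_eq_mul, mul_assoc]

lemma diff_eY (y : E2) : Differentiable ℝ (eYf y) := fun ξ => (hasFDerivAt_eY y ξ).differentiableAt

lemma integrable_atom {u : E2 → ℂ} {W : Type*} [NormedAddCommGroup W] [NormedSpace ℝ W]
    (hcont : Continuous u) (Φ : 𝓢(E2, W)) (k : ℕ) (C : ℝ)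
    (hb : ∀ ξ, ‖u ξ‖ ≤ C * (‖ξ‖ ^ k * ‖Φ ξ‖)) : Integrable u volume := by
  refine ((Φ.integrable_pow_mul volume k).const_mul C).mono'
    hcont.aestronglyMeasurable (ae_of_all _ hb)

lemma coord_abs_le (x : E2) (i : Fin 2) : |x i| ≤ ‖x‖ := by
  have h := abs_real_inner_le_norm x (e2 i)
  rw [inner_e2_right] at h
  calc |x i| ≤ ‖x‖ * ‖e2 i‖ := h
  _ ≤ ‖x‖ := by simp [e2, EuclideanSpace.norm_single]

lemma inner_coords (x z : E2) : (inner ℝ x z : ℝ) = ∑ i : Fin 2, x i * z i := by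
  simp [PiLp.inner_apply, RCLike.inner_apply]
  ring

lemma norm_e2 (i : Fin 2) : ‖e2 i‖ = 1 := by simp [e2, EuclideanSpace.norm_single]

lemma key_integral {γ : ℝ} (hγ : 0 < γ) (Φ : 𝓢(E2, ℂ)) (y : E2) :
    (∫ ξ : E2, (c1 γ ξ * (-(2 * Φ ξ + fderiv ℝ ⇑Φ ξ ξ))) * eYf y ξ)
      - ∫ ξ : E2, (Complex.I * ((inner ℝ y ξ : ℝ) : ℂ) * (c1 γ ξ * Φ ξ)) * eYf y ξ
    = ∫ ξ : E2, ((2 : ℂ) * (γ : ℂ) * (c2 γ ξ * (-((‖ξ‖ ^ 2 : ℝ) : ℂ) * Φ ξ))) * eYf y ξ := by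
  set ρ : E2 → ℂ := fun ξ => c1 γ ξ * Φ ξ with hρdef
  set ρ' : E2 → (E2 →L[ℝ] ℂ) := fun ξ => c1 γ ξ • fderiv ℝ ⇑Φ ξ + Φ ξ • c1d γ ξ with hρ'def
  have hρ : ∀ ξ, HasFDerivAt ρ (ρ' ξ) ξ := fun ξ =>
    (hasFDerivAt_c1 hγ ξ).mul (Φ.differentiable ξ).hasFDerivAt
  set Φ' := fderivCLM ℝ E2 ℂ Φ with hΦ'def
  have hDΦ : fderiv ℝ ⇑Φ = ⇑Φ' := fderiv_eq_schwartz Φ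
  have hDΦcont : Continuous fun ξ => fderiv ℝ ⇑Φ ξ := by rw [hDΦ]; exact Φ'.continuous
  have hDΦnorm : ∀ ξ : E2, ‖fderiv ℝ ⇑Φ ξ‖ = ‖Φ' ξ‖ := fun ξ => by rw [hDΦ]
  -- atoms
  have hI1 : Integrable (fun ξ : E2 => ρ ξ * eYf y ξ) volume := by
    refine integrable_atom (((cont_c1 hγ).mul Φ.continuous).mul (cont_eY y)) Φ 0 1 fun ξ => ?_
    rw [norm_mul, norm_mul, norm_eY, mul_one, pow_zero, one_mul, one_mul]
    calc ‖c1 γ ξ‖ * ‖Φ ξ‖ ≤ 1 * ‖Φ ξ‖ := by gcongr; exact c1_norm_le hγ ξ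
    _ = ‖Φ ξ‖ := one_mul _
  have hI2 : Integrable (fun ξ : E2 => (c1 γ ξ * (fderiv ℝ ⇑Φ ξ ξ)) * eYf y ξ) volume := by
    refine integrable_atom (((cont_c1 hγ).mul (hDΦcont.clm_apply continuous_id)).mul
      (cont_eY y)) Φ' 1 1 fun ξ => ?_
    rw [norm_mul, norm_mul, norm_eY, mul_one, one_mul, pow_one]
    calc ‖c1 γ ξ‖ * ‖fderiv ℝ ⇑Φ ξ ξ‖ ≤ 1 * (‖fderiv ℝ ⇑Φ ξ‖ * ‖ξ‖) := by
          gcongr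
          · exact c1_norm_le hγ ξ
          · exact (fderiv ℝ ⇑Φ ξ).le_opNorm ξ
    _ = ‖ξ‖ * ‖Φ' ξ‖ := by rw [one_mul, hDΦnorm, mul_comm]
  have hI3 : ∀ i : Fin 2, Integrable
      (fun ξ : E2 => (((inner ℝ (e2 i) ξ : ℝ) : ℂ) * ρ ξ) * eYf y ξ) volume := by
    intro i
    refine integrable_atom (((Complex.continuous_ofReal.comp
      (continuous_const.inner continuous_id)).mul ((cont_c1 hγ).mul Φ.continuous)).mul
      (cont_eY y)) Φ 1 1 fun ξ => ?_
    rw [norm_mul, norm_mul, norm_eY, mul_one, one_mul, pow_one, norm_mul, Complex.norm_real,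
      Real.norm_eq_abs, inner_e2_left]
    calc |ξ i| * (‖c1 γ ξ‖ * ‖Φ ξ‖) ≤ ‖ξ‖ * (1 * ‖Φ ξ‖) := by
          gcongr
          · exact coord_abs_le ξ i
          · exact c1_norm_le hγ ξ
    _ = ‖ξ‖ * ‖Φ ξ‖ := by rw [one_mul]
  have hc1d_norm : ∀ ξ v : E2, ‖c1d γ ξ v‖ ≤ 2 * γ * (‖ξ‖ * ‖v‖) := by
    intro ξ v
    rw [c1d_apply, norm_mul, norm_mul]
    calc ‖-(2 * (γ:ℂ))‖ * ‖c2 γ ξ‖ * ‖((inner ℝ ξ v : ℝ) : ℂ)‖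
        ≤ (2 * γ) * 1 * (‖ξ‖ * ‖v‖) := by
          gcongr
          · rw [norm_neg, show (2 * (γ:ℂ)) = (((2 * γ : ℝ)) : ℂ) by push_cast; ring,
              Complex.norm_real, Real.norm_eq_abs, abs_of_pos (by positivity)]
          · exact c2_norm_le hγ ξ
          · rw [Complex.norm_real, Real.norm_eq_abs]
            exact abs_real_inner_le_norm ξ v
    _ = 2 * γ * (‖ξ‖ * ‖v‖) := by ring
  have hI4 : ∀ i : Fin 2, Integrable
      (fun ξ : E2 => (((inner ℝ (e2 i) ξ : ℝ) : ℂ) * (Φ ξ * c1d γ ξ (e2 i))) * eYf y ξ) volume := by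
    intro i
    have hcont : Continuous fun ξ : E2 => c1d γ ξ (e2 i) := by
      exact ((continuous_const.mul (cont_c2 hγ)).mul
        (Complex.continuous_ofReal.comp (continuous_id.inner continuous_const))).congr
        (fun ξ => (c1d_apply γ ξ (e2 i)).symm)
    refine integrable_atom (((Complex.continuous_ofReal.comp
      (continuous_const.inner continuous_id)).mul (Φ.continuous.mul hcont)).mul
      (cont_eY y)) Φ 2 (2 * γ) fun ξ => ?_
    rw [norm_mul, norm_mul, norm_eY, mul_one, norm_mul, Complex.norm_real,
      Real.norm_eq_abs, inner_e2_left]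
    calc |ξ i| * (‖Φ ξ‖ * ‖c1d γ ξ (e2 i)‖)
        ≤ ‖ξ‖ * (‖Φ ξ‖ * (2 * γ * (‖ξ‖ * 1))) := by
          gcongr
          · exact coord_abs_le ξ i
          · calc ‖c1d γ ξ (e2 i)‖ ≤ 2 * γ * (‖ξ‖ * ‖e2 i‖) := hc1d_norm ξ (e2 i)
            _ = 2 * γ * (‖ξ‖ * 1) := by rw [norm_e2]
    _ = 2 * γ * (‖ξ‖ ^ 2 * ‖Φ ξ‖) := by ring
  have hI5 : ∀ i : Fin 2, Integrable
      (fun ξ : E2 => (((inner ℝ (e2 i) ξ : ℝ) : ℂ) * (c1 γ ξ * fderiv ℝ ⇑Φ ξ (e2 i))) * eYf y ξ)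
      volume := by
    intro i
    refine integrable_atom (((Complex.continuous_ofReal.comp
      (continuous_const.inner continuous_id)).mul ((cont_c1 hγ).mul
      (hDΦcont.clm_apply continuous_const))).mul (cont_eY y)) Φ' 1 1 fun ξ => ?_
    rw [norm_mul, norm_mul, norm_eY, mul_one, one_mul, pow_one, norm_mul, Complex.norm_real,
      Real.norm_eq_abs, inner_e2_left]
    calc |ξ i| * (‖c1 γ ξ‖ * ‖fderiv ℝ ⇑Φ ξ (e2 i)‖)
        ≤ ‖ξ‖ * (1 * (‖fderiv ℝ ⇑Φ ξ‖ * ‖e2 i‖)) := by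
          gcongr
          · exact coord_abs_le ξ i
          · exact c1_norm_le hγ ξ
          · exact (fderiv ℝ ⇑Φ ξ).le_opNorm (e2 i)
    _ = ‖ξ‖ * ‖Φ' ξ‖ := by rw [norm_e2, hDΦnorm]; ring
  -- IBP per coordinate
  have hper : ∀ i : Fin 2,
      (Complex.I * ((y i : ℝ) : ℂ)) * ∫ ξ : E2, (((inner ℝ (e2 i) ξ : ℝ) : ℂ) * ρ ξ) * eYf y ξ
      = -∫ ξ : E2, ((((inner ℝ (e2 i) ξ : ℝ) : ℂ) * (ρ' ξ (e2 i)) + ρ ξ) * eYf y ξ) := by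
    intro i
    have hcoord : ∀ ξ : E2, HasFDerivAt (fun ξ : E2 => (((inner ℝ (e2 i) ξ : ℝ)) : ℂ))
        ((Complex.ofRealCLM).comp (innerSL ℝ (e2 i))) ξ := fun ξ =>
      ((Complex.ofRealCLM).comp (innerSL ℝ (e2 i))).hasFDerivAt
    have hfd : ∀ ξ : E2, HasFDerivAt (fun ξ : E2 => ((inner ℝ (e2 i) ξ : ℝ) : ℂ) * ρ ξ)
        ((((inner ℝ (e2 i) ξ : ℝ) : ℂ)) • ρ' ξ + ρ ξ • ((Complex.ofRealCLM).comp
          (innerSL ℝ (e2 i)))) ξ := fun ξ => (hcoord ξ).mul (hρ ξ)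
    have hfval : ∀ ξ : E2, fderiv ℝ (fun ξ : E2 => ((inner ℝ (e2 i) ξ : ℝ) : ℂ) * ρ ξ) ξ (e2 i)
        = ((inner ℝ (e2 i) ξ : ℝ) : ℂ) * (ρ' ξ (e2 i)) + ρ ξ := by
      intro ξ
      rw [(hfd ξ).fderiv]
      simp only [ContinuousLinearMap.add_apply, ContinuousLinearMap.smul_apply,
        ContinuousLinearMap.coe_comp', Function.comp_apply, innerSL_apply_apply,
        Complex.ofRealCLM_apply, smul_eq_mul, inner_e2_e2]
      push_cast
      ring
    have hgval : ∀ ξ : E2, fderiv ℝ (eYf y) ξ (e2 i)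
        = eYf y ξ * (Complex.I * ((y i : ℝ) : ℂ)) := by
      intro ξ
      rw [fderiv_eY_apply, inner_e2_right]
    have hf'g : Integrable (fun ξ : E2 =>
        fderiv ℝ (fun ξ : E2 => ((inner ℝ (e2 i) ξ : ℝ) : ℂ) * ρ ξ) ξ (e2 i) * eYf y ξ) volume := by
      apply (((hI5 i).add (hI4 i)).add hI1).congr
      apply ae_of_all _ fun ξ => ?_
      dsimp only [Pi.add_apply]
      rw [hfval ξ]
      simp only [hρ'def, ContinuousLinearMap.add_apply, ContinuousLinearMap.smul_apply,
        smul_eq_mul, Pi.add_apply]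
      ring
    have hfg' : Integrable (fun ξ : E2 =>
        (((inner ℝ (e2 i) ξ : ℝ) : ℂ) * ρ ξ) * fderiv ℝ (eYf y) ξ (e2 i)) volume := by
      apply ((hI3 i).const_mul (Complex.I * ((y i : ℝ) : ℂ))).congr
      apply ae_of_all _ fun ξ => ?_
      dsimp only
      rw [hgval ξ]
      ring
    have hibp := integral_mul_fderiv_eq_neg_fderiv_mul_of_integrable
      (f := fun ξ : E2 => ((inner ℝ (e2 i) ξ : ℝ) : ℂ) * ρ ξ) (g := eYf y) (v := e2 i)
      (μ := volume) hf'g hfg' (hI3 i) (fun ξ _ => (hfd ξ).differentiableAt) (fun ξ _ => diff_eY y ξ)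
    calc (Complex.I * ((y i : ℝ) : ℂ)) * ∫ ξ : E2, (((inner ℝ (e2 i) ξ : ℝ) : ℂ) * ρ ξ) * eYf y ξ
          = ∫ ξ : E2, (((inner ℝ (e2 i) ξ : ℝ) : ℂ) * ρ ξ) * fderiv ℝ (eYf y) ξ (e2 i) := by
            rw [← MeasureTheory.integral_const_mul]
            congr 1
            funext ξ
            rw [hgval ξ]
            ring
      _ = -∫ ξ : E2, fderiv ℝ (fun ξ : E2 => ((inner ℝ (e2 i) ξ : ℝ) : ℂ) * ρ ξ) ξ (e2 i)
            * eYf y ξ := hibp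
      _ = -∫ ξ : E2, ((((inner ℝ (e2 i) ξ : ℝ) : ℂ) * (ρ' ξ (e2 i)) + ρ ξ) * eYf y ξ) := by
            congr 1
            apply integral_congr_ae (ae_of_all _ fun ξ => ?_)
            rw [hfval ξ]
  have hI6 : ∀ i : Fin 2, Integrable
      (fun ξ : E2 => (((inner ℝ (e2 i) ξ : ℝ) : ℂ) * (ρ' ξ (e2 i))) * eYf y ξ) volume := by
    intro i
    apply ((hI5 i).add (hI4 i)).congr
    apply ae_of_all _ fun ξ => ?_
    dsimp only [Pi.add_apply]
    simp only [hρ'def, ContinuousLinearMap.add_apply, ContinuousLinearMap.smul_apply,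
      smul_eq_mul, Pi.add_apply]
    ring
  have hI7 : Integrable (fun ξ : E2 => (Φ ξ * c1d γ ξ ξ) * eYf y ξ) volume := by
    have hcont : Continuous fun ξ : E2 => c1d γ ξ ξ := by
      have h0 : Continuous fun ξ : E2 => -(2 * (γ:ℂ)) * c2 γ ξ * ((inner ℝ ξ ξ : ℝ) : ℂ) :=
        (continuous_const.mul (cont_c2 hγ)).mul
          (Complex.continuous_ofReal.comp (continuous_id.inner continuous_id))
      exact h0.congr fun ξ => (c1d_apply γ ξ ξ).symm
    refine integrable_atom ((Φ.continuous.mul hcont).mul (cont_eY y)) Φ 2 (2 * γ) fun ξ => ?_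
    rw [norm_mul, norm_mul, norm_eY, mul_one]
    calc ‖Φ ξ‖ * ‖c1d γ ξ ξ‖ ≤ ‖Φ ξ‖ * (2 * γ * (‖ξ‖ * ‖ξ‖)) := by
          gcongr
          exact hc1d_norm ξ ξ
    _ = 2 * γ * (‖ξ‖ ^ 2 * ‖Φ ξ‖) := by ring
  have hI8 : Integrable (fun ξ : E2 => (ρ' ξ ξ) * eYf y ξ) volume := by
    apply (hI2.add hI7).congr
    apply ae_of_all _ fun ξ => ?_
    dsimp only [Pi.add_apply]
    simp only [hρ'def, ContinuousLinearMap.add_apply, ContinuousLinearMap.smul_apply,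
      smul_eq_mul, Pi.add_apply]
    ring
  -- rewrite the first integral
  have e1 : (fun ξ : E2 => (c1 γ ξ * (-(2 * Φ ξ + fderiv ℝ ⇑Φ ξ ξ))) * eYf y ξ)
      = fun ξ => (-2 : ℂ) * (ρ ξ * eYf y ξ)
        + (-1 : ℂ) * ((c1 γ ξ * fderiv ℝ ⇑Φ ξ ξ) * eYf y ξ) := by
    funext ξ
    simp only [hρdef]
    ring
  -- rewrite the middle integrand as a sum
  have e2' : (fun ξ : E2 => (Complex.I * ((inner ℝ y ξ : ℝ) : ℂ) * (c1 γ ξ * Φ ξ)) * eYf y ξ)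
      = fun ξ => ∑ i : Fin 2, (Complex.I * ((y i : ℝ) : ℂ))
        * ((((inner ℝ (e2 i) ξ : ℝ) : ℂ) * ρ ξ) * eYf y ξ) := by
    funext ξ
    have h1 : ((inner ℝ y ξ : ℝ) : ℂ) = ∑ i : Fin 2, ((y i : ℝ) : ℂ) * ((ξ i : ℝ) : ℂ) := by
      rw [inner_coords y ξ]
      push_cast
      rfl
    rw [h1, Finset.mul_sum, Finset.sum_mul, Finset.sum_mul]
    refine Finset.sum_congr rfl fun i _ => ?_
    simp only [inner_e2_left, hρdef]
    ring
  rw [e1, integral_add (hI1.const_mul _) (hI2.const_mul _),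
    MeasureTheory.integral_const_mul, MeasureTheory.integral_const_mul, e2',
    integral_finset_sum _ (fun i _ => ((hI3 i).const_mul _))]
  have e3 : ∀ i : Fin 2, (∫ ξ : E2, (Complex.I * ((y i : ℝ) : ℂ))
      * ((((inner ℝ (e2 i) ξ : ℝ) : ℂ) * ρ ξ) * eYf y ξ))
      = -((∫ ξ : E2, (((inner ℝ (e2 i) ξ : ℝ) : ℂ) * (ρ' ξ (e2 i))) * eYf y ξ)
          + ∫ ξ : E2, ρ ξ * eYf y ξ) := by
    intro i
    rw [MeasureTheory.integral_const_mul, hper i, ← integral_add (hI6 i) hI1]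
    congr 1
    apply integral_congr_ae (ae_of_all _ fun ξ => ?_)
    ring
  rw [Finset.sum_congr rfl fun i _ => e3 i, Finset.sum_neg_distrib, Finset.sum_add_distrib]
  have hS : (∑ i : Fin 2, ∫ ξ : E2, (((inner ℝ (e2 i) ξ : ℝ) : ℂ) * (ρ' ξ (e2 i))) * eYf y ξ)
      = ∫ ξ : E2, (ρ' ξ ξ) * eYf y ξ := by
    rw [← integral_finset_sum _ (fun i _ => hI6 i)]
    apply integral_congr_ae (ae_of_all _ fun ξ => ?_)
    rw [← Finset.sum_mul]
    congr 1
    calc ∑ i : Fin 2, (((inner ℝ (e2 i) ξ : ℝ) : ℂ)) * (ρ' ξ) (e2 i)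
        = ∑ i : Fin 2, ((ξ i : ℝ) : ℂ) * (ρ' ξ) (e2 i) := by
          refine Finset.sum_congr rfl fun i _ => ?_
          rw [inner_e2_left]
    _ = (ρ' ξ) ξ := sum_coord_mul_apply (ρ' ξ) ξ
  rw [hS]
  simp only [Finset.sum_const, Finset.card_univ, Fintype.card_fin, nsmul_eq_mul]
  have hfinal : (∫ ξ : E2, (ρ' ξ ξ) * eYf y ξ)
      - (∫ ξ : E2, (c1 γ ξ * fderiv ℝ ⇑Φ ξ ξ) * eYf y ξ)
      = ∫ ξ : E2, ((2 : ℂ) * (γ : ℂ) * (c2 γ ξ * (-((‖ξ‖ ^ 2 : ℝ) : ℂ) * Φ ξ))) * eYf y ξ := by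
    rw [← integral_sub hI8 hI2]
    apply integral_congr_ae (ae_of_all _ fun ξ => ?_)
    have hval : ρ' ξ ξ = c1 γ ξ * fderiv ℝ ⇑Φ ξ ξ
        + Φ ξ * (-(2 * (γ : ℂ)) * c2 γ ξ * ((‖ξ‖ ^ 2 : ℝ) : ℂ)) := by
      simp only [hρ'def, ContinuousLinearMap.add_apply, ContinuousLinearMap.smul_apply,
        smul_eq_mul, Pi.add_apply]
      rw [c1d_apply, real_inner_self_eq_norm_sq]
    rw [hval]
    ring
  linear_combination hfinal

noncomputable def scaleE : E2 ≃L[ℝ] E2 :=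
  (LinearEquiv.smulOfNeZero ℝ E2 (2 * Real.pi)⁻¹
    (inv_ne_zero (by positivity))).toContinuousLinearEquiv

noncomputable def FS (f : 𝓢(E2, ℂ)) : 𝓢(E2, ℂ) :=
  SchwartzMap.compCLMOfContinuousLinearEquiv ℝ scaleE (SchwartzMap.fourierTransformCLM ℝ f)

lemma Fi_eq_FS (f : 𝓢(E2, ℂ)) : Fi ⇑f = ⇑(FS f) := by
  funext ξ
  have h1 : FS f ξ = FourierTransform.fourier (⇑f : E2 → ℂ) ((2 * Real.pi)⁻¹ • ξ) := rfl
  rw [h1]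
  show VectorFourier.fourierIntegral Real.fourierChar volume Lb.toLinearMap₁₂ ⇑f ξ
    = VectorFourier.fourierIntegral Real.fourierChar volume (innerₗ E2) ⇑f ((2 * Real.pi)⁻¹ • ξ)
  unfold VectorFourier.fourierIntegral
  congr 1
  funext v
  congr 2
  show -(Lb v ξ) = -(inner ℝ v ((2 * Real.pi)⁻¹ • ξ) : ℝ)
  rw [Lb_apply, real_inner_smul_right]

lemma Fi_apply_neg (u : E2 → ℂ) (y : E2) :
    Fi u (-y) = ∫ ξ : E2, u ξ * eYf y ξ := by
  rw [Fi_eq]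
  congr 1
  funext ξ
  rw [eYf]
  congr 1
  have h : (inner ℝ ξ (-y) : ℝ) = -(inner ℝ y ξ : ℝ) := by
    rw [inner_neg_right, real_inner_comm]
  rw [h]
  push_cast
  ring

lemma termA (γ : ℝ) (hγ : 0 < γ) (f : 𝓢(E2, ℂ)) (y : E2) :
    resolv γ 1 (fun x => fderiv ℝ (⇑f) x x) y
      = (((2 * Real.pi)⁻¹ : ℝ) : ℂ) * ((((2 * Real.pi)⁻¹ : ℝ) : ℂ) *
        ∫ ξ : E2, (c1 γ ξ * (-(2 * FS f ξ + fderiv ℝ ⇑(FS f) ξ ξ))) * eYf y ξ) := by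
  rw [resolv_eq, Fi_apply_neg, ← MeasureTheory.integral_const_mul]
  conv_rhs => rw [← MeasureTheory.integral_const_mul, ← MeasureTheory.integral_const_mul]
  apply integral_congr_ae (ae_of_all _ fun ξ => ?_)
  rw [ft2_eq, L_A f ξ, Fi_eq_FS f]
  simp only [pow_one, c1]
  ring

lemma termC (γ : ℝ) (hγ : 0 < γ) (f : 𝓢(E2, ℂ)) (y : E2) :
    resolv γ 2 (lap2 ⇑f) y
      = (((2 * Real.pi)⁻¹ : ℝ) : ℂ) * ((((2 * Real.pi)⁻¹ : ℝ) : ℂ) *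
        ∫ ξ : E2, (c2 γ ξ * (-((‖ξ‖ ^ 2 : ℝ) : ℂ) * FS f ξ)) * eYf y ξ) := by
  rw [resolv_eq, Fi_apply_neg, ← MeasureTheory.integral_const_mul]
  conv_rhs => rw [← MeasureTheory.integral_const_mul, ← MeasureTheory.integral_const_mul]
  apply integral_congr_ae (ae_of_all _ fun ξ => ?_)
  rw [ft2_eq, L_C f ξ, Fi_eq_FS f]
  simp only [c2]
  ring

lemma termB (γ : ℝ) (hγ : 0 < γ) (f : 𝓢(E2, ℂ)) (y : E2) :
    fderiv ℝ (resolv γ 1 ⇑f) y y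
      = (((2 * Real.pi)⁻¹ : ℝ) : ℂ) * ((((2 * Real.pi)⁻¹ : ℝ) : ℂ) *
        ∫ ξ : E2, (Complex.I * ((inner ℝ y ξ : ℝ) : ℂ) * (c1 γ ξ * FS f ξ)) * eYf y ξ) := by
  set c : ℂ := (((2 * Real.pi)⁻¹ : ℝ) : ℂ) with hc
  set Q : E2 → ℂ := fun ξ => (((1 + γ * ‖ξ‖ ^ 2) ^ 1 : ℝ) : ℂ)⁻¹ * ft2 (⇑f) ξ with hQ
  have hres : resolv γ 1 ⇑f = fun z => c * Fi Q (-z) := funext fun z => resolv_eq γ 1 ⇑f z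
  have hQc1 : ∀ ξ, Q ξ = c * (c1 γ ξ * FS f ξ) := by
    intro ξ
    rw [hQ]
    simp only [pow_one, c1]
    rw [ft2_eq, Fi_eq_FS f]
    ring
  have hQcont : Continuous Q :=
    ((continuous_const.mul ((cont_c1 hγ).mul (FS f).continuous))).congr fun ξ => (hQc1 ξ).symm
  have hQnorm : ∀ ξ, ‖Q ξ‖ ≤ (2 * Real.pi)⁻¹ * ‖FS f ξ‖ := by
    intro ξ
    rw [hQc1 ξ, norm_mul, norm_mul, hc, Complex.norm_real, Real.norm_eq_abs,
      abs_of_pos (by positivity)]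
    calc (2 * Real.pi)⁻¹ * (‖c1 γ ξ‖ * ‖FS f ξ‖) ≤ (2 * Real.pi)⁻¹ * (1 * ‖FS f ξ‖) := by
          gcongr
          exact c1_norm_le hγ ξ
    _ = (2 * Real.pi)⁻¹ * ‖FS f ξ‖ := by rw [one_mul]
  have hQint : Integrable Q volume := by
    refine integrable_atom hQcont (FS f) 0 ((2 * Real.pi)⁻¹) fun ξ => ?_
    rw [pow_zero, one_mul]
    exact hQnorm ξ
  have hQ1int : Integrable (fun ξ : E2 => ‖ξ‖ * ‖Q ξ‖) volume := by
    refine (((FS f).integrable_pow_mul volume 1).const_mul ((2 * Real.pi)⁻¹)).mono'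
      (continuous_norm.mul hQcont.norm).aestronglyMeasurable (ae_of_all _ fun ξ => ?_)
    have h0 : |‖ξ‖ * ‖Q ξ‖| = ‖ξ‖ * ‖Q ξ‖ := abs_of_nonneg (by positivity)
    rw [Real.norm_eq_abs, h0, pow_one]
    calc ‖ξ‖ * ‖Q ξ‖ ≤ ‖ξ‖ * ((2 * Real.pi)⁻¹ * ‖FS f ξ‖) := by
          gcongr
          exact hQnorm ξ
    _ = (2 * Real.pi)⁻¹ * (‖ξ‖ * ‖FS f ξ‖) := by ring
  have HD := VectorFourier.hasFDerivAt_fourierIntegral Lb hQint hQ1int (-y)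
  have hneg : HasFDerivAt (fun z : E2 => -z) (-(ContinuousLinearMap.id ℝ E2)) y := by
    exact (hasFDerivAt_id y).neg
  have Hcomp := HD.comp y hneg
  have Hfull : HasFDerivAt (fun z : E2 => c * Fi Q (-z))
      (c • ((Fi (VectorFourier.fourierSMulRight Lb Q) (-y)).comp
        (-(ContinuousLinearMap.id ℝ E2)))) y := by
    have := Hcomp.const_mul c
    exact this
  rw [hres, Hfull.fderiv]
  have hfSRint : Integrable (VectorFourier.fourierSMulRight Lb Q) volume := by
    refine (hQ1int.const_mul (2 * Real.pi * ‖Lb‖)).mono'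
      (hQcont.aestronglyMeasurable.fourierSMulRight) (ae_of_all _ fun v => ?_)
    simpa [mul_assoc] using VectorFourier.norm_fourierSMulRight_le Lb Q v
  have hval : (c • ((Fi (VectorFourier.fourierSMulRight Lb Q) (-y)).comp
      (-(ContinuousLinearMap.id ℝ E2)))) y
      = c * (-(Fi (VectorFourier.fourierSMulRight Lb Q) (-y) y)) := by
    simp only [ContinuousLinearMap.smul_apply, ContinuousLinearMap.coe_comp',
      Function.comp_apply, ContinuousLinearMap.neg_apply, ContinuousLinearMap.coe_id', id_eq,
      map_neg, smul_eq_mul]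
  rw [hval, Fi_clm_apply hfSRint (-y) y]
  have hpt : (fun ξ : E2 => VectorFourier.fourierSMulRight Lb Q ξ y)
      = fun ξ => -(c * (Complex.I * ((inner ℝ y ξ : ℝ) : ℂ) * (c1 γ ξ * FS f ξ))) := by
    funext ξ
    show -(2 * ↑Real.pi * Complex.I) • Lb ξ y • Q ξ = _
    rw [hQc1 ξ, Lb_apply, real_inner_comm ξ y, hc]
    simp only [Complex.real_smul, smul_eq_mul]
    have hπ : (Real.pi : ℂ) ≠ 0 := Complex.ofReal_ne_zero.2 Real.pi_ne_zero
    push_cast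
    field_simp
  rw [hpt]
  rw [show (fun ξ : E2 => -(c * (Complex.I * ((inner ℝ y ξ : ℝ) : ℂ) * (c1 γ ξ * FS f ξ))))
      = fun ξ : E2 => -(c * (Complex.I * ((inner ℝ y ξ : ℝ) : ℂ) * (c1 γ ξ * FS f ξ))) from rfl]
  have h1 : Fi (fun ξ : E2 => -(c * (Complex.I * ((inner ℝ y ξ : ℝ) : ℂ) * (c1 γ ξ * FS f ξ)))) (-y)
      = -(c * Fi (fun ξ : E2 => Complex.I * ((inner ℝ y ξ : ℝ) : ℂ) * (c1 γ ξ * FS f ξ)) (-y)) := by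
    rw [Fi_neg, Fi_const_mul]
  rw [h1, Fi_apply_neg]
  ring


/-- Commutator identity `[(1-γΔ)⁻¹, y]·∇f = 2γ(1-γΔ)⁻²Δf` for Schwartz `f`, i.e.
`(1-γΔ)⁻¹(y·∇f) - y·∇((1-γΔ)⁻¹f) = 2γ(1-γΔ)⁻²Δf`. -/
theorem stmt_5 (γ : ℝ) (hγ : 0 < γ) (f : SchwartzMap E2 ℂ) (y : E2) :
    resolv γ 1 (fun x => fderiv ℝ (⇑f) x x) y - fderiv ℝ (resolv γ 1 (⇑f)) y y
      = 2 * (γ : ℂ) * resolv γ 2 (lap2 (⇑f)) y := by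
  rw [termA γ hγ f y, termB γ hγ f y, termC γ hγ f y]
  have hkey := key_integral hγ (FS f) y
  have hpull : (∫ ξ : E2, ((2 : ℂ) * (γ : ℂ) * (c2 γ ξ * (-((‖ξ‖ ^ 2 : ℝ) : ℂ) * FS f ξ)))
        * eYf y ξ)
      = (2 : ℂ) * (γ : ℂ) * ∫ ξ : E2, (c2 γ ξ * (-((‖ξ‖ ^ 2 : ℝ) : ℂ) * FS f ξ)) * eYf y ξ := by
    rw [← MeasureTheory.integral_const_mul]
    apply integral_congr_ae (ae_of_all _ fun ξ => ?_)
    ring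
  rw [hpull] at hkey
  linear_combination ((((2 * Real.pi)⁻¹ : ℝ) : ℂ) * (((2 * Real.pi)⁻¹ : ℝ) : ℂ)) * hkey
end

section
/- Let b : [s₁, s₂] → ℝ be C¹ and N₀ : [s₁,s₂] → [0,∞) integrable, and suppose there are constants θ > 0 and C₁ with (3/4)b(s)² + b'(s)/θ ≤ C₁ N₀(s) for all s, and |b(s)| ≤ κ ≤ 1. Then for each m ∈ {2,3,4}: ∫_{s₁}^{s₂} |b(s)|^m ds ≤ C (κ^{m−2} ∫_{s₁}^{s₂} N₀(s) ds + |b(s₁)|^{m−1} + |b(s₂)|^{m−1}) for a constant C depending only on θ, C₁. -/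
/-!
Multiplying the differential inequality by `|b|^k` (so that `m = k + 2`) turns `b' |b|^k` into the
derivative of `b |b|^k / (k + 1)`. Integrating, `(3/4) ∫ |b|^(k+2)` is bounded by `κ^k C₁ ∫ N₀` plus
the boundary term `(b |b|^k)(s₁) - (b |b|^k)(s₂)`, divided by `(k + 1) θ`, and that boundary term is
at most `|b(s₁)|^(k+1) + |b(s₂)|^(k+1)` in absolute value.
-/

open MeasureTheory intervalIntegral Filter Topology Set

theorem hasDerivAt_mul_abs_pow (k : ℕ) (x : ℝ) :
    HasDerivAt (fun y : ℝ => y * |y| ^ k) ((k + 1) * |x| ^ k) x := by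
  rcases lt_trichotomy x 0 with hx | rfl | hx
  · have hf : (fun y : ℝ => y * |y| ^ k) =ᶠ[𝓝 x] fun y => (-1) ^ k * y ^ (k + 1) := by
      filter_upwards [Iio_mem_nhds hx] with y hy
      rw [abs_of_neg hy]; ring
    refine (((hasDerivAt_pow (k + 1) x).const_mul _).congr_of_eventuallyEq hf).congr_deriv ?_
    rw [abs_of_neg hx]; push_cast; ring
  · rcases k.eq_zero_or_pos with rfl | hk
    · simpa using hasDerivAt_id' (0 : ℝ)
    rw [hasDerivAt_iff_tendsto_slope]
    have hslope : slope (fun y : ℝ => y * |y| ^ k) 0 =ᶠ[𝓝[≠] 0] fun y => |y| ^ k := by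
      filter_upwards [self_mem_nhdsWithin] with y hy
      rw [slope_def_field]
      field_simp [show y ≠ 0 from hy]
      simp [mul_comm]
    have hcont : Tendsto (fun y : ℝ => |y| ^ k) (𝓝 0) (𝓝 0) := by
      simpa [zero_pow hk.ne'] using (show Continuous fun y : ℝ => |y| ^ k by fun_prop).tendsto 0
    simpa [zero_pow hk.ne'] using (hcont.mono_left nhdsWithin_le_nhds).congr' hslope.symm
  · have hf : (fun y : ℝ => y * |y| ^ k) =ᶠ[𝓝 x] fun y => y ^ (k + 1) := by
      filter_upwards [Ioi_mem_nhds hx] with y hy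
      rw [abs_of_pos hy]; ring
    refine ((hasDerivAt_pow (k + 1) x).congr_of_eventuallyEq hf).congr_deriv ?_
    rw [abs_of_pos hx]; push_cast; ring

section

variable {s₁ s₂ : ℝ} {b b' : ℝ → ℝ}

theorem integral_abs_pow_mul_deriv (hs : s₁ ≤ s₂)
    (hb : ∀ s ∈ Icc s₁ s₂, HasDerivAt b (b' s) s) (hb' : ContinuousOn b' (Icc s₁ s₂)) (k : ℕ) :
    ∫ s in s₁..s₂, |b s| ^ k * b' s = (b s₂ * |b s₂| ^ k - b s₁ * |b s₁| ^ k) / (k + 1) := by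
  have hderiv : ∀ s ∈ uIcc s₁ s₂,
      HasDerivAt (fun s => b s * |b s| ^ k / (k + 1)) (|b s| ^ k * b' s) s := by
    intro s hs'
    rw [uIcc_of_le hs] at hs'
    refine (((hasDerivAt_mul_abs_pow k (b s)).comp s (hb s hs')).div_const _).congr_deriv ?_
    field_simp
  have hcont : ContinuousOn (fun s => |b s| ^ k * b' s) (uIcc s₁ s₂) := by
    rw [uIcc_of_le hs]
    exact ((HasDerivAt.continuousOn hb).abs.pow k).mul hb'
  rw [integral_eq_sub_of_hasDerivAt hderiv (hcont.intervalIntegrable), sub_div]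

theorem abs_integral_abs_pow_mul_deriv_le (hs : s₁ ≤ s₂)
    (hb : ∀ s ∈ Icc s₁ s₂, HasDerivAt b (b' s) s) (hb' : ContinuousOn b' (Icc s₁ s₂)) (k : ℕ) :
    |∫ s in s₁..s₂, |b s| ^ k * b' s| ≤ |b s₁| ^ (k + 1) + |b s₂| ^ (k + 1) := by
  have hk : (1 : ℝ) ≤ k + 1 := by simp
  have habs : ∀ x : ℝ, |x * |x| ^ k| = |x| ^ (k + 1) := fun x => by
    rw [abs_mul, abs_pow, abs_abs, pow_succ']
  rw [integral_abs_pow_mul_deriv hs hb hb' k, abs_div, abs_of_pos (by positivity : (0 : ℝ) < k + 1),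
    div_le_iff₀ (by positivity)]
  calc |b s₂ * |b s₂| ^ k - b s₁ * |b s₁| ^ k|
      ≤ |b s₂ * |b s₂| ^ k| + |b s₁ * |b s₁| ^ k| := abs_sub _ _
    _ = |b s₁| ^ (k + 1) + |b s₂| ^ (k + 1) := by rw [habs, habs, add_comm]
    _ ≤ (|b s₁| ^ (k + 1) + |b s₂| ^ (k + 1)) * (k + 1) := le_mul_of_one_le_right (by positivity) hk

theorem integral_abs_pow_add_two_le {θ κ : ℝ} {N : ℝ → ℝ} (hθ : 0 < θ) (hs : s₁ ≤ s₂)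
    (hb : ∀ s ∈ Icc s₁ s₂, HasDerivAt b (b' s) s) (hb' : ContinuousOn b' (Icc s₁ s₂))
    (hN : ∀ s ∈ Icc s₁ s₂, 0 ≤ N s) (hNint : IntegrableOn N (Icc s₁ s₂))
    (hineq : ∀ s ∈ Icc s₁ s₂, 3 / 4 * b s ^ 2 + b' s / θ ≤ N s)
    (hbκ : ∀ s ∈ Icc s₁ s₂, |b s| ≤ κ) (k : ℕ) :
    ∫ s in s₁..s₂, |b s| ^ (k + 2) ≤
      4 / 3 * (κ ^ k * (∫ s in s₁..s₂, N s) + (|b s₁| ^ (k + 1) + |b s₂| ^ (k + 1)) / θ) := by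
  have hpt : ∀ s ∈ Icc s₁ s₂,
      3 / 4 * |b s| ^ (k + 2) + |b s| ^ k * b' s / θ ≤ κ ^ k * N s := by
    intro s hs'
    calc 3 / 4 * |b s| ^ (k + 2) + |b s| ^ k * b' s / θ
        = |b s| ^ k * (3 / 4 * b s ^ 2 + b' s / θ) := by rw [← sq_abs (b s)]; ring
      _ ≤ |b s| ^ k * N s := by gcongr; exact hineq s hs'
      _ ≤ κ ^ k * N s := by
          gcongr
          exacts [hN s hs', hbκ s hs']
  have hbc : ContinuousOn (fun s => |b s|) (uIcc s₁ s₂) := by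
    rw [uIcc_of_le hs]; exact (HasDerivAt.continuousOn hb).abs
  have hb'c : ContinuousOn b' (uIcc s₁ s₂) := by rwa [uIcc_of_le hs]
  have hpow : IntervalIntegrable (fun s => |b s| ^ (k + 2)) volume s₁ s₂ :=
    (hbc.pow _).intervalIntegrable
  have hcross : IntervalIntegrable (fun s => |b s| ^ k * b' s) volume s₁ s₂ :=
    ((hbc.pow _).mul hb'c).intervalIntegrable
  have hNi : IntervalIntegrable N volume s₁ s₂ :=
    (intervalIntegrable_iff_integrableOn_Icc_of_le hs).2 hNint
  have hmono := integral_mono_on hs ((hpow.const_mul _).add (hcross.div_const _))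
    (hNi.const_mul _) hpt
  rw [integral_add (hpow.const_mul _) (hcross.div_const _), intervalIntegral.integral_const_mul,
    intervalIntegral.integral_div, intervalIntegral.integral_const_mul] at hmono
  have hbdry := div_le_div_of_nonneg_right
    (neg_le_of_abs_le (abs_integral_abs_pow_mul_deriv_le hs hb hb' k)) hθ.le
  rw [neg_div] at hbdry
  linarith

end

theorem stmt_19_general (θ C₁ : ℝ) (hθ : 0 < θ) :
    ∃ C > (0 : ℝ), ∀ (s₁ s₂ κ : ℝ) (b b' N₀ : ℝ → ℝ),
      s₁ ≤ s₂ → 0 < κ → κ ≤ 1 →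
      (∀ s ∈ Set.Icc s₁ s₂, HasDerivAt b (b' s) s) →
      ContinuousOn b' (Set.Icc s₁ s₂) →
      (∀ s ∈ Set.Icc s₁ s₂, 0 ≤ N₀ s) →
      IntegrableOn N₀ (Set.Icc s₁ s₂) →
      (∀ s ∈ Set.Icc s₁ s₂, (3 / 4) * (b s) ^ 2 + b' s / θ ≤ C₁ * N₀ s) →
      (∀ s ∈ Set.Icc s₁ s₂, |b s| ≤ κ) →
      ∀ m : ℕ, m ∈ ({2, 3, 4} : Set ℕ) →
        ∫ s in s₁..s₂, |b s| ^ m ≤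
          C * (κ ^ (m - 2) * (∫ s in s₁..s₂, N₀ s)
            + |b s₁| ^ (m - 1) + |b s₂| ^ (m - 1)) := by
  obtain ⟨c, hc, hC₁c⟩ : ∃ c : ℝ, 0 ≤ c ∧ C₁ ≤ c := ⟨max C₁ 0, le_max_right _ _, le_max_left _ _⟩
  refine ⟨4 / 3 * (c + 1 / θ), by positivity, ?_⟩
  intro s₁ s₂ κ b b' N₀ hs _ _ hb hb' hN hNint hineq hbκ m hm
  obtain ⟨k, rfl⟩ : ∃ k, m = k + 2 := by
    rcases hm with rfl | rfl | rfl <;> exact ⟨_, rfl⟩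
  have hmain := integral_abs_pow_add_two_le (N := fun s => c * N₀ s) hθ hs hb hb'
    (fun s hs' => mul_nonneg hc (hN s hs')) (hNint.const_mul c)
    (fun s hs' => (hineq s hs').trans (mul_le_mul_of_nonneg_right hC₁c (hN s hs'))) hbκ k
  rw [intervalIntegral.integral_const_mul, mul_left_comm] at hmain
  have hκ : 0 ≤ κ := (abs_nonneg _).trans (hbκ s₁ (left_mem_Icc.2 hs))
  set A := κ ^ k * ∫ s in s₁..s₂, N₀ s
  set B := |b s₁| ^ (k + 1) + |b s₂| ^ (k + 1)
  have hA : 0 ≤ A := mul_nonneg (pow_nonneg hκ k) (integral_nonneg hs hN)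
  have hB : 0 ≤ B := by positivity
  simp only [Nat.add_sub_cancel, Nat.add_sub_assoc one_le_two, show 2 - 1 = 1 from rfl, add_assoc]
  calc _ ≤ 4 / 3 * (c * A + B / θ) := hmain
    _ ≤ 4 / 3 * (c * A + B / θ) + 4 / 3 * (c * B + A / θ) := by
      have := add_nonneg (mul_nonneg hc hB) (div_nonneg hA hθ.le)
      linarith
    _ = 4 / 3 * (c + 1 / θ) * (A + B) := by ring

/-- Control of powers of `b`: if `(3/4)b² + b'/θ ≤ C₁N₀` with `N₀ ≥ 0` and
`|b| ≤ κ ≤ 1` on `[s₁,s₂]`, then for `m ∈ {2,3,4}`,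
`∫|b|^m ≤ C(κ^{m-2}∫N₀ + |b(s₁)|^{m-1} + |b(s₂)|^{m-1})` with `C = C(θ,C₁)`. -/
theorem stmt_19 (θ C₁ : ℝ) (hθ : 0 < θ) (hC₁ : 0 < C₁) :
    ∃ C > (0 : ℝ), ∀ (s₁ s₂ κ : ℝ) (b b' N₀ : ℝ → ℝ),
      s₁ ≤ s₂ → 0 < κ → κ ≤ 1 →
      (∀ s ∈ Set.Icc s₁ s₂, HasDerivAt b (b' s) s) →
      ContinuousOn b' (Set.Icc s₁ s₂) →
      (∀ s ∈ Set.Icc s₁ s₂, 0 ≤ N₀ s) →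
      IntegrableOn N₀ (Set.Icc s₁ s₂) →
      (∀ s ∈ Set.Icc s₁ s₂, (3 / 4) * (b s) ^ 2 + b' s / θ ≤ C₁ * N₀ s) →
      (∀ s ∈ Set.Icc s₁ s₂, |b s| ≤ κ) →
      ∀ m : ℕ, m ∈ ({2, 3, 4} : Set ℕ) →
        ∫ s in s₁..s₂, |b s| ^ m ≤
          C * (κ ^ (m - 2) * (∫ s in s₁..s₂, N₀ s)
            + |b s₁| ^ (m - 1) + |b s₂| ^ (m - 1)) :=
  stmt_19_general θ C₁ hθ
end
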